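/- arXiv:1505.07736 — 3 statements merged into one kernel-verified Lean document; each statement's English description precedes it below -/
import Mathlib

section
/- For an element x of a nominal set X, there are at most |supp(x)|! many elements in the orbit of x whose least support equals supp(x). -/
open Pointwise

/-- The subgroup of finite permutations of the atoms `ℕ`. -/
def FinPerm : Subgroup (Equiv.Perm ℕ) where
  carrier := {π | {v | π v ≠ v}.Finite}
  one_mem' := by simp
  mul_mem' := by
    intro a b ha hb
    refine (ha.union hb).subset ?_
    intro v hv
    simp only [Set.mem_setOf_eq, Equiv.Perm.mul_apply] at hv
    by_contra h
    simp only [Set.mem_union, Set.mem_setOf_eq, not_or, not_not] at h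
    rw [h.2] at hv
    exact hv h.1
  inv_mem' := by
    intro a ha
    refine ha.subset ?_
    intro v hv
    simp only [Set.mem_setOf_eq] at hv ⊢
    intro h
    exact hv (by conv_lhs => rw [← h, ← Equiv.Perm.mul_apply, inv_mul_cancel, Equiv.Perm.one_apply])


/-- Equivariant maps between `FinPerm`-sets. -/
def Equivariant {X Y : Type*} [MulAction FinPerm X] [MulAction FinPerm Y] (f : X → Y) : Prop :=
  ∀ (π : FinPerm) (x : X), f (π • x) = π • f x

/-- A finite set of atoms supports an element. -/
def Supports {X : Type*} [MulAction FinPerm X] (S : Finset ℕ) (x : X) : Prop :=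
  ∀ π : FinPerm, (∀ v ∈ S, π • v = v) → π • x = x

/-- A nominal set: a `FinPerm`-set with a least finite support function. -/
class NominalSet (X : Type*) [MulAction FinPerm X] where
  supp : X → Finset ℕ
  supports_supp : ∀ x : X, Supports (supp x) x
  supp_least : ∀ (x : X) (S : Finset ℕ), Supports S x → supp x ⊆ S

open NominalSet

lemma supports_smul {X : Type*} [MulAction FinPerm X] [NominalSet X] (π : FinPerm) (z : X) :
    Supports ((supp z).image (fun v => π • v)) (π • z) := by
  intro σ hσ
  have h1 : (π⁻¹ * σ * π) • z = z := by
    apply supports_supp z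
    intro v hv
    have h2 := hσ (π • v) (Finset.mem_image_of_mem _ hv)
    calc (π⁻¹ * σ * π) • v = π⁻¹ • σ • π • v := by rw [mul_smul, mul_smul]
    _ = π⁻¹ • π • v := by rw [h2]
    _ = v := inv_smul_smul _ _
  calc σ • π • z = π • (π⁻¹ * σ * π) • z := by rw [mul_smul, mul_smul, smul_inv_smul]
  _ = π • z := by rw [h1]

lemma supp_smul {X : Type*} [MulAction FinPerm X] [NominalSet X] (π : FinPerm) (z : X) :
    supp (π • z) = (supp z).image (fun v => π • v) := by
  apply Finset.Subset.antisymm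
  · exact supp_least _ _ (supports_smul π z)
  · have h := supp_least _ _ (supports_smul π⁻¹ (π • z))
    rw [inv_smul_smul] at h
    have h2 := Finset.image_subset_image (f := fun v => π • v) h
    rw [Finset.image_image] at h2
    refine h2.trans ?_
    intro a ha
    simp only [Finset.mem_image, Function.comp] at ha
    obtain ⟨b, hb, rfl⟩ := ha
    simpa [smul_inv_smul] using hb

theorem encard_same_supp_in_orbit_le_factorial' {X : Type*} [MulAction FinPerm X] [NominalSet X]
    (x : X) :
    {y ∈ MulAction.orbit FinPerm x | supp y = supp x}.encard
      ≤ ((supp x).card.factorial : ℕ∞) := by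
  classical
  set S := supp x with hS
  set T : Set X := {y ∈ MulAction.orbit FinPerm x | supp y = supp x} with hT
  -- for each y in T pick a permutation sending x to y
  have hperm : ∀ y ∈ T, ∃ π : FinPerm, π • x = y := by
    intro y hy
    exact MulAction.mem_orbit_iff.mp hy.1
  have choice : ∀ y : X, ∃ π : FinPerm, y ∈ T → π • x = y := by
    intro y
    by_cases hy : y ∈ T
    · obtain ⟨π, hπ⟩ := hperm y hy
      exact ⟨π, fun _ => hπ⟩
    · exact ⟨1, fun h => absurd h hy⟩
  choose p hp using choice
  -- each such permutation maps S into S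
  have maps : ∀ y ∈ T, ∀ a ∈ S, p y • a ∈ S := by
    intro y hy a ha
    have h1 : supp (p y • x) = S.image (fun v => p y • v) := supp_smul _ _
    rw [hp y hy] at h1
    have h2 : S.image (fun v => p y • v) = S := by rw [← h1]; exact hy.2
    rw [← h2]
    exact Finset.mem_image_of_mem _ ha
  -- the map to embeddings S ↪ S
  have smul_inj : ∀ π : FinPerm, Function.Injective (fun v : ℕ => π • v) :=
    fun π => (π : Equiv.Perm ℕ).injective
  let f : X → (S ↪ S) := fun y =>
    if hy : y ∈ T then
      ⟨fun a => ⟨p y • (a : ℕ), maps y hy a a.2⟩, by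
        intro a b hab
        have := smul_inj (p y) (congrArg Subtype.val hab)
        exact Subtype.ext this⟩
    else Function.Embedding.refl S
  have hinj : Set.InjOn f T := by
    intro y₁ h₁ y₂ h₂ hf
    have hfix : ∀ a ∈ S, p y₁ • a = p y₂ • a := by
      intro a ha
      have h3 : ((f y₁ ⟨a, ha⟩ : S) : ℕ) = ((f y₂ ⟨a, ha⟩ : S) : ℕ) := by rw [hf]
      simp [f, h₁, h₂] at h3
      exact congrArg Subtype.val h3
    have key : ((p y₂)⁻¹ * p y₁) • x = x := by
      apply supports_supp x
      intro v hv
      rw [mul_smul, hfix v hv, inv_smul_smul]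
    calc y₁ = p y₁ • x := (hp y₁ h₁).symm
    _ = p y₂ • ((p y₂)⁻¹ * p y₁) • x := by rw [mul_smul, smul_inv_smul]
    _ = p y₂ • x := by rw [key]
    _ = y₂ := hp y₂ h₂
  have hcard : (Set.univ : Set (S ↪ S)).encard = (S.card.factorial : ℕ∞) := by
    rw [Set.encard_univ, ENat.card_eq_coe_fintype_card, Fintype.card_embedding_eq]
    simp [Fintype.card_coe, Nat.descFactorial_self]
  calc T.encard ≤ (Set.univ : Set (S ↪ S)).encard :=
        Set.encard_le_encard_of_injOn (fun y _ => Set.mem_univ _) hinj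
  _ = (S.card.factorial : ℕ∞) := hcard

/-- In the orbit of `x` there are at most `|supp x|!` elements whose least support
equals `supp x`. -/
theorem encard_same_supp_in_orbit_le_factorial {X : Type*} [MulAction FinPerm X] [NominalSet X]
    (x : X) :
    {y ∈ MulAction.orbit FinPerm x | supp y = supp x}.encard
      ≤ ((supp x).card.factorial : ℕ∞) :=
  encard_same_supp_in_orbit_le_factorial' x
end

section
/- If π ∈ Perm(𝕍) satisfies π·supp(x) = supp(x) (setwise) for an element x of a nominal set, then π factors as π = f ∘ g where f fixes 𝕍 ∖ supp(x) pointwise, g fixes supp(x) pointwise, and g·x = x; consequently π·x = f·x. -/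
open Pointwise

open NominalSet

/-- If `π` fixes `supp x` setwise, then `π = f * g` where `f` fixes the complement of
`supp x` pointwise, `g` fixes `supp x` pointwise and `g • x = x`; consequently `π • x = f • x`. -/
theorem factor_of_setwise_fix {X : Type*} [MulAction FinPerm X] [NominalSet X]
    (x : X) (π : FinPerm) (h : π • supp x = supp x) :
    ∃ f g : FinPerm,
      (∀ v : ℕ, v ∉ supp x → f • v = v) ∧
      (∀ v ∈ supp x, g • v = v) ∧
      g • x = x ∧ π = f * g ∧ π • x = f • x := by
  classical
  have smul_def : ∀ (a : FinPerm) (v : ℕ), a • v = (a : Equiv.Perm ℕ) v := fun a v => rfl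
  set S := supp x with hS
  have hmem : ∀ v ∈ S, (π : Equiv.Perm ℕ) v ∈ S := by
    intro v hv
    have : π • v ∈ π • S := Finset.smul_mem_smul_finset hv
    rwa [h] at this
  have hmem' : ∀ v ∈ S, ((π : Equiv.Perm ℕ))⁻¹ v ∈ S := by
    intro v hv
    have : π⁻¹ • v ∈ S := by
      rw [Finset.inv_smul_mem_iff, h]; exact hv
    simpa [smul_def] using this
  let fe : Equiv.Perm ℕ :=
    { toFun := fun v => if v ∈ S then (π : Equiv.Perm ℕ) v else v
      invFun := fun v => if v ∈ S then ((π : Equiv.Perm ℕ))⁻¹ v else v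
      left_inv := by
        intro v
        by_cases hv : v ∈ S
        · simp [hv, hmem v hv]
        · simp [hv]
      right_inv := by
        intro v
        by_cases hv : v ∈ S
        · have h' := hmem' v hv
          simp only [Equiv.Perm.inv_def] at h'
          simp [hv, h']
        · simp [hv] }
  have hfin : {v | fe v ≠ v}.Finite := by
    apply Set.Finite.subset S.finite_toSet
    intro v hv
    by_contra hvS
    have hvS' : v ∉ S := by simpa using hvS
    exact hv (by simp [fe, hvS'])
  refine ⟨⟨fe, hfin⟩, ⟨fe, hfin⟩⁻¹ * π, ?_, ?_, ?_, ?_, ?_⟩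
  · intro v hv
    show fe v = v
    simp [fe, hv]
  · intro v hv
    have hπv : (π : Equiv.Perm ℕ) v ∈ S := hmem v hv
    show (fe⁻¹ * (π : Equiv.Perm ℕ)) v = v
    simp only [Equiv.Perm.mul_apply]
    show fe.symm _ = v
    have : fe.symm ((π : Equiv.Perm ℕ) v) = if (π : Equiv.Perm ℕ) v ∈ S then ((π : Equiv.Perm ℕ))⁻¹ ((π : Equiv.Perm ℕ) v) else (π : Equiv.Perm ℕ) v := rfl
    rw [this, if_pos hπv]
    simp
  · apply supports_supp x
    intro v hv
    have hπv : (π : Equiv.Perm ℕ) v ∈ S := hmem v hv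
    show (fe⁻¹ * (π : Equiv.Perm ℕ)) v = v
    simp only [Equiv.Perm.mul_apply]
    show fe.symm _ = v
    have : fe.symm ((π : Equiv.Perm ℕ) v) = if (π : Equiv.Perm ℕ) v ∈ S then ((π : Equiv.Perm ℕ))⁻¹ ((π : Equiv.Perm ℕ) v) else (π : Equiv.Perm ℕ) v := rfl
    rw [this, if_pos hπv]
    simp
  · group
  · have hg : (⟨fe, hfin⟩⁻¹ * π : FinPerm) • x = x := by
      apply supports_supp x
      intro v hv
      have hπv : (π : Equiv.Perm ℕ) v ∈ S := hmem v hv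
      show (fe⁻¹ * (π : Equiv.Perm ℕ)) v = v
      simp only [Equiv.Perm.mul_apply]
      show fe.symm _ = v
      have : fe.symm ((π : Equiv.Perm ℕ) v) = if (π : Equiv.Perm ℕ) v ∈ S then ((π : Equiv.Perm ℕ))⁻¹ ((π : Equiv.Perm ℕ) v) else (π : Equiv.Perm ℕ) v := rfl
      rw [this, if_pos hπv]
      simp
    calc π • x = (⟨fe, hfin⟩ * (⟨fe, hfin⟩⁻¹ * π) : FinPerm) • x := by group
    _ = (⟨fe, hfin⟩ : FinPerm) • ((⟨fe, hfin⟩⁻¹ * π : FinPerm) • x) := by rw [mul_smul]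
    _ = (⟨fe, hfin⟩ : FinPerm) • x := by rw [hg]
end

section
/- Let X be a nominal set and W ⊆ 𝕍 a finite set with |W| = m+1. For any orbit O of X whose elements have least support of cardinality k ≤ m, the number of elements of O with least support contained in W is at most C(m+1, k) · k! = (m+1)!/(m+1−k)!, which is at most (m+1)!. Consequently, if X has n orbits and every element of X has support of cardinality at most m, then |{x ∈ X ∣ supp(x) ⊆ W}| ≤ n·(m+1)!. -/
open Pointwise

open NominalSet

section helper

variable {X : Type*} [MulAction FinPerm X] [NominalSet X]

lemma finperm_smul_nat (π : FinPerm) (v : ℕ) : π • v = (π : Equiv.Perm ℕ) v := rfl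

lemma supports_image (π : FinPerm) (x : X) :
    Supports ((supp x).image (π : Equiv.Perm ℕ)) (π • x) := by
  intro σ hσ
  have key : (π⁻¹ * σ * π) • x = x := by
    apply supports_supp x
    intro v hv
    have : σ • ((π : Equiv.Perm ℕ) v) = (π : Equiv.Perm ℕ) v :=
      hσ _ (Finset.mem_image_of_mem _ hv)
    simp only [finperm_smul_nat] at this ⊢
    simp [this]
  calc σ • π • x = π • (π⁻¹ * σ * π) • x := by
        rw [smul_smul, smul_smul]; congr 1; group
      _ = π • x := by rw [key]

lemma supp_smul_s8 (π : FinPerm) (x : X) :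
    supp (π • x) = (supp x).image (π : Equiv.Perm ℕ) := by
  apply Finset.Subset.antisymm
  · exact supp_least _ _ (supports_image π x)
  · have h2 : supp (π⁻¹ • π • x) ⊆ (supp (π • x)).image ((π⁻¹ : FinPerm) : Equiv.Perm ℕ) :=
      supp_least _ _ (supports_image π⁻¹ (π • x))
    rw [inv_smul_smul] at h2
    intro w hw
    obtain ⟨v, hv, rfl⟩ := Finset.mem_image.mp hw
    have := h2 hv
    obtain ⟨u, hu, huv⟩ := Finset.mem_image.mp this
    have : (π : Equiv.Perm ℕ) v = u := by
      have : (π : Equiv.Perm ℕ) (((π : Equiv.Perm ℕ))⁻¹ u) = u := by simp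
      rw [← huv]; simpa using this
    rwa [this]

end helper
section helper2

open NominalSet

variable {X : Type*} [MulAction FinPerm X] [NominalSet X]

lemma orbit_count (x₀ : X) (W : Finset ℕ) :
    {y ∈ MulAction.orbit FinPerm x₀ | supp y ⊆ W}.encard
      ≤ ((W.card.descFactorial (supp x₀).card : ℕ) : ℕ∞) := by
  classical
  set s : Set X := {y ∈ MulAction.orbit FinPerm x₀ | supp y ⊆ W} with hs
  have hπ : ∀ y : ↥s, ∃ π : FinPerm, π • x₀ = (y : X) :=
    fun y => MulAction.mem_orbit_iff.mp y.2.1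
  choose π hπeq using hπ
  have hmem : ∀ (y : ↥s) (v : ℕ), v ∈ supp x₀ → ((π y : Equiv.Perm ℕ)) v ∈ W := by
    intro y v hv
    have h1 : supp ((π y) • x₀) = (supp x₀).image ((π y : Equiv.Perm ℕ)) := supp_smul_s8 _ _
    have h2 : ((π y : Equiv.Perm ℕ)) v ∈ supp ((π y) • x₀) := by
      rw [h1]; exact Finset.mem_image_of_mem _ hv
    rw [hπeq y] at h2
    exact y.2.2 h2
  set F : ↥s → (↥(supp x₀) ↪ ↥W) := fun y =>
    ⟨fun v => ⟨(π y : Equiv.Perm ℕ) v, hmem y v v.2⟩, by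
      intro a b hab
      simp only [Subtype.mk_eq_mk] at hab
      exact Subtype.ext ((π y : Equiv.Perm ℕ).injective hab)⟩ with hF
  have hFinj : Function.Injective F := by
    intro y z hyz
    have hag : ∀ v ∈ supp x₀, (π y : Equiv.Perm ℕ) v = (π z : Equiv.Perm ℕ) v := by
      intro v hv
      have := congrArg (fun g : ↥(supp x₀) ↪ ↥W => (g ⟨v, hv⟩ : ℕ)) hyz
      exact this
    have hfix : ((π z)⁻¹ * (π y)) • x₀ = x₀ := by
      apply supports_supp x₀
      intro v hv
      have h0 : ((π z)⁻¹ * (π y)) • v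
          = ((π z : Equiv.Perm ℕ))⁻¹ ((π y : Equiv.Perm ℕ) v) := rfl
      rw [h0, hag v hv]
      simp
    have hyx : (y : X) = (z : X) := by
      rw [← hπeq y, ← hπeq z]
      calc (π y) • x₀ = (π z) • (((π z)⁻¹ * (π y)) • x₀) := by
            rw [smul_smul]; congr 1; group
        _ = (π z) • x₀ := by rw [hfix]
    exact Subtype.ext hyx
  have hfin : Finite ↥s := Finite.of_injective F hFinj
  have hsfin : s.Finite := Set.finite_coe_iff.mp hfin
  rw [Set.encard_le_coe_iff_finite_ncard_le]
  refine ⟨hsfin, ?_⟩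
  have h1 : s.ncard = Nat.card ↥s := (Nat.card_coe_set_eq s).symm
  have h2 : Nat.card ↥s ≤ Nat.card (↥(supp x₀) ↪ ↥W) :=
    Nat.card_le_card_of_injective F hFinj
  have h3 : Nat.card (↥(supp x₀) ↪ ↥W) = W.card.descFactorial (supp x₀).card := by
    rw [Nat.card_eq_fintype_card, Fintype.card_embedding_eq, Fintype.card_coe, Fintype.card_coe]
  rw [h1, ← h3]
  exact h2

lemma encard_iUnion_le' {α ι : Type*} [Fintype ι] (t : ι → Set α) :
    (⋃ i, t i).encard ≤ ∑ i, (t i).encard := by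
  classical
  have key : ∀ F : Finset ι, (⋃ i ∈ F, t i).encard ≤ ∑ i ∈ F, (t i).encard := by
    intro F
    induction F using Finset.induction with
    | empty => simp
    | insert a F' hnotmem ih =>
      rw [Finset.set_biUnion_insert, Finset.sum_insert hnotmem]
      exact le_trans (Set.encard_union_le _ _) (add_le_add_right ih _)
  have := key Finset.univ
  simpa using this

end helper2

/-- Counting elements with support inside a fixed `(m+1)`-element set `W` of atoms:
any orbit whose elements have supports of size `k ≤ m` contributes at most
`C(m+1,k)·k! = (m+1)!/(m+1−k)! ≤ (m+1)!` elements, and an orbit-finite nominal set with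
`n` orbits and supports of size at most `m` has at most `n·(m+1)!` such elements. -/
theorem count_supp_subset_bound {X : Type*} [MulAction FinPerm X] [NominalSet X]
    (W : Finset ℕ) (m : ℕ) (hW : W.card = m + 1) :
    (∀ (x₀ : X) (k : ℕ), k ≤ m →
        (∀ y ∈ MulAction.orbit FinPerm x₀, (supp y).card = k) →
        {y ∈ MulAction.orbit FinPerm x₀ | supp y ⊆ W}.encard
            ≤ (((m+1).choose k * k.factorial : ℕ) : ℕ∞) ∧
          (m+1).choose k * k.factorial = (m+1).factorial / (m+1-k).factorial ∧
          (m+1).choose k * k.factorial ≤ (m+1).factorial) ∧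
    (∀ n : ℕ, Finite (MulAction.orbitRel.Quotient FinPerm X) →
        Nat.card (MulAction.orbitRel.Quotient FinPerm X) = n →
        (∀ x : X, (supp x).card ≤ m) →
        {x : X | supp x ⊆ W}.encard ≤ ((n * (m+1).factorial : ℕ) : ℕ∞)) := by
  constructor
  · intro x₀ k hk hcard
    have hx0 : (supp x₀).card = k := hcard x₀ (MulAction.mem_orbit_self x₀)
    have hkm1 : k ≤ m + 1 := le_trans hk (Nat.le_succ m)
    have hprod : (m+1).choose k * k.factorial * (m+1-k).factorial = (m+1).factorial :=
      Nat.choose_mul_factorial_mul_factorial hkm1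
    have hdesc : (m+1).descFactorial k = (m+1).choose k * k.factorial := by
      rw [Nat.descFactorial_eq_factorial_mul_choose]; ring
    have hmain := orbit_count x₀ W
    rw [hW, hx0, hdesc] at hmain
    refine ⟨hmain, ?_, ?_⟩
    · exact (Nat.div_eq_of_eq_mul_left (Nat.factorial_pos _) hprod.symm).symm
    · calc (m+1).choose k * k.factorial
          ≤ (m+1).choose k * k.factorial * (m+1-k).factorial :=
            Nat.le_mul_of_pos_right _ (Nat.factorial_pos _)
        _ = (m+1).factorial := hprod
  · intro n hfin hcardQ hsupp
    classical
    haveI := Fintype.ofFinite (MulAction.orbitRel.Quotient FinPerm X)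
    set t : MulAction.orbitRel.Quotient FinPerm X → Set X :=
      fun q => {y ∈ MulAction.orbit FinPerm (Quotient.out q) | supp y ⊆ W} with ht
    have hsub : {x : X | supp x ⊆ W} ⊆ ⋃ q, t q := by
      intro x hx
      refine Set.mem_iUnion.mpr ⟨Quotient.mk _ x, ?_, hx⟩
      have h1 : Quotient.out (Quotient.mk _ x) ∈ MulAction.orbit FinPerm x :=
        MulAction.orbitRel_apply.mp (Quotient.mk_out x)
      have h2 := MulAction.orbit_eq_iff.mpr h1
      rw [h2]
      exact MulAction.mem_orbit_self x
    have h2 : ∀ q, (t q).encard ≤ (((m+1).factorial : ℕ) : ℕ∞) := by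
      intro q
      have hoc := orbit_count (X := X) (Quotient.out q) W
      rw [hW] at hoc
      refine le_trans hoc ?_
      norm_cast
      set j := (supp (Quotient.out q)).card with hj
      have hkq : j ≤ m + 1 := le_trans (hsupp _) (Nat.le_succ m)
      calc (m+1).descFactorial j
          = (m+1).choose j * j.factorial := by
            rw [Nat.descFactorial_eq_factorial_mul_choose]; ring
        _ ≤ (m+1).choose j * j.factorial * (m+1-j).factorial :=
            Nat.le_mul_of_pos_right _ (Nat.factorial_pos _)
        _ = (m+1).factorial := Nat.choose_mul_factorial_mul_factorial hkq
    calc {x : X | supp x ⊆ W}.encard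
        ≤ (⋃ q, t q).encard := Set.encard_le_encard hsub
      _ ≤ ∑ q, (t q).encard := encard_iUnion_le' t
      _ ≤ ∑ _q : MulAction.orbitRel.Quotient FinPerm X, (((m+1).factorial : ℕ) : ℕ∞) :=
          Finset.sum_le_sum (fun q _ => h2 q)
      _ = (Fintype.card (MulAction.orbitRel.Quotient FinPerm X)) •
            (((m+1).factorial : ℕ) : ℕ∞) := by
          rw [Finset.sum_const, Finset.card_univ]
      _ = ((n * (m+1).factorial : ℕ) : ℕ∞) := by
          rw [← Nat.card_eq_fintype_card, hcardQ, nsmul_eq_mul]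
          norm_cast
end
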